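/- arXiv:1601.06523 — 2 statements merged into one kernel-verified Lean document; each statement's English description precedes it below -/
import Mathlib

section
/- Let q₀ > 2, let ξ ∈ L_{q₀} be a real random variable with ‖ξ‖_{L_{q₀}} > 0, and let ξ₁,...,ξ_N be independent copies of ξ. Then for every u ≥ 2, with probability at least 1 − 2 u^{−q₀}, one has ξ_i* ≤ u ‖ξ‖_{L_{q₀}} (eN/i)^{1/q₀} for every 1 ≤ i ≤ N, where (ξ_i*)_{i=1}^N is the non-increasing rearrangement of (|ξ_i|)_{i=1}^N. Moreover, for each fixed i, Pr( ξ_i* ≥ u ‖ξ‖_{L_{q₀}} (eN/i)^{1/q₀} ) ≤ u^{−i q₀}. -/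
open MeasureTheory ProbabilityTheory Real
open scoped ENNReal NNReal

noncomputable def decRearr {n : ℕ} (x : Fin n → ℝ) : Fin n → ℝ :=
  fun j => |x (Tuple.sort (fun i => -|x i|) j)|

noncomputable def pNorm {Ω : Type*} [MeasurableSpace Ω] (μ : Measure Ω) (Z : Ω → ℝ) (q : ℝ) : ℝ :=
  (∫ ω, |Z ω| ^ q ∂μ) ^ (1 / q)

lemma decRearr_antitone {n : ℕ} (x : Fin n → ℝ) : Antitone (decRearr x) := by
  intro j k hjk
  have := Tuple.monotone_sort (fun i => -|x i|) hjk
  simpa [decRearr] using this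

lemma decRearr_exists_finset {n : ℕ} (x : Fin n → ℝ) (i : Fin n) (t : ℝ)
    (h : t ≤ decRearr x i) :
    ∃ S : Finset (Fin n), S.card = (i : ℕ) + 1 ∧ ∀ j ∈ S, t ≤ |x j| := by
  refine ⟨(Finset.Iic i).image (Tuple.sort (fun i => -|x i|)), ?_, ?_⟩
  · rw [Finset.card_image_of_injective _ (Equiv.injective _), Fin.card_Iic]
  · intro j hj
    obtain ⟨a, ha, rfl⟩ := Finset.mem_image.mp hj
    exact h.trans (decRearr_antitone x (Finset.mem_Iic.mp ha))

lemma choose_le_epow (N k : ℕ) (hk : 0 < k) :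
    (N.choose k : ℝ) ≤ (Real.exp 1 * N / k) ^ k := by
  have hkpos : (0:ℝ) < k := by exact_mod_cast hk
  have h1 : (N.choose k : ℝ) ≤ (N:ℝ) ^ k / (k.factorial : ℝ) := Nat.choose_le_pow_div k N
  have h2 : (k:ℝ) ^ k / (k.factorial : ℝ) ≤ Real.exp k :=
    Real.pow_div_factorial_le_exp (x := (k:ℝ)) (by positivity) k
  have h3 : Real.exp (k:ℝ) = Real.exp 1 ^ k := by
    rw [← Real.exp_nat_mul]; ring_nf
  have hfac : (0:ℝ) < (k.factorial : ℝ) := by exact_mod_cast k.factorial_pos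
  have h4 : (k:ℝ) ^ k ≤ Real.exp 1 ^ k * (k.factorial : ℝ) := by
    rw [h3] at h2
    calc (k:ℝ)^k = (k:ℝ)^k / (k.factorial : ℝ) * (k.factorial : ℝ) := by field_simp
    _ ≤ Real.exp 1 ^ k * (k.factorial : ℝ) := by
        apply mul_le_mul_of_nonneg_right h2 hfac.le
  calc (N.choose k : ℝ) ≤ (N:ℝ) ^ k / (k.factorial : ℝ) := h1
    _ ≤ (Real.exp 1 * N / k) ^ k := by
        rw [div_pow, mul_pow]
        rw [div_le_div_iff₀ hfac (by positivity)]
        calc (N:ℝ)^k * (k:ℝ)^k ≤ (N:ℝ)^k * (Real.exp 1 ^ k * (k.factorial : ℝ)) := by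
              apply mul_le_mul_of_nonneg_left h4 (by positivity)
          _ = Real.exp 1 ^ k * (N:ℝ)^k * (k.factorial : ℝ) := by ring

lemma markov_rpow {Ω : Type} [MeasurableSpace Ω] (μ : Measure Ω) [IsProbabilityMeasure μ]
    (ξ : Ω → ℝ) (q₀ : ℝ) (hq : 0 < q₀) (hξL : MemLp ξ (ENNReal.ofReal q₀) μ)
    (t : ℝ) (ht : 0 < t) :
    μ {ω | t ≤ |ξ ω|} ≤ ENNReal.ofReal ((∫ ω, |ξ ω| ^ q₀ ∂μ) / t ^ q₀) := by
  have hint : Integrable (fun ω => |ξ ω| ^ q₀) μ := by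
    have := hξL.integrable_norm_rpow (by simp [ENNReal.ofReal_eq_zero]; linarith)
      ENNReal.ofReal_ne_top
    simpa [Real.norm_eq_abs, ENNReal.toReal_ofReal hq.le] using this
  have hsub : {ω | t ≤ |ξ ω|} ⊆ {ω | t ^ q₀ ≤ |ξ ω| ^ q₀} := by
    intro ω hω
    exact Real.rpow_le_rpow ht.le hω hq.le
  have hmarkov := mul_meas_ge_le_integral_of_nonneg
    (ae_of_all μ (fun ω => Real.rpow_nonneg (abs_nonneg _) q₀)) hint (t ^ q₀)
  have htq : (0:ℝ) < t ^ q₀ := Real.rpow_pos_of_pos ht q₀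
  have hfin : μ {ω | t ≤ |ξ ω|} ≠ ⊤ := measure_ne_top μ _
  rw [ENNReal.le_ofReal_iff_toReal_le hfin (by positivity)]
  have hmono : (μ {ω | t ≤ |ξ ω|}).toReal ≤ (μ {ω | t ^ q₀ ≤ |ξ ω| ^ q₀}).toReal :=
    ENNReal.toReal_mono (measure_ne_top μ _) (measure_mono hsub)
  rw [le_div_iff₀ htq]
  calc (μ {ω | t ≤ |ξ ω|}).toReal * t ^ q₀
      ≤ (μ {ω | t ^ q₀ ≤ |ξ ω| ^ q₀}).toReal * t ^ q₀ := by
        exact mul_le_mul_of_nonneg_right hmono htq.le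
    _ = t ^ q₀ * (μ {ω | t ^ q₀ ≤ |ξ ω| ^ q₀}).toReal := mul_comm _ _
    _ ≤ ∫ ω, |ξ ω| ^ q₀ ∂μ := hmarkov

/-- if ξ ∈ L_{q₀} with q₀ > 2, ‖ξ‖_{L_{q₀}} > 0, and ξ₁,...,ξ_N are iid
copies of ξ, then for every u ≥ 2, with probability at least 1 − 2u^{−q₀},
ξ_i* ≤ u ‖ξ‖_{L_{q₀}} (eN/i)^{1/q₀} for every 1 ≤ i ≤ N; moreover for each fixed i,
Pr(ξ_i* ≥ u ‖ξ‖_{L_{q₀}} (eN/i)^{1/q₀}) ≤ u^{−i q₀}. (i : Fin N stands for index i+1.) -/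
theorem stmt5 (q₀ : ℝ) (hq₀ : 2 < q₀)
    {Ω : Type} [MeasurableSpace Ω] (μ : Measure Ω) [IsProbabilityMeasure μ]
    (ξ : Ω → ℝ) (hξm : Measurable ξ) (hξL : MemLp ξ (ENNReal.ofReal q₀) μ)
    (hξpos : 0 < pNorm μ ξ q₀)
    (N : ℕ) (ξ' : Fin N → Ω → ℝ) (hm : ∀ i, Measurable (ξ' i))
    (hindep : iIndepFun ξ' μ)
    (hid : ∀ i, IdentDistrib (ξ' i) ξ μ μ)
    (u : ℝ) (hu : 2 ≤ u) :
    ENNReal.ofReal (1 - 2 * u ^ (-q₀))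
        ≤ μ {ω | ∀ i : Fin N,
            decRearr (fun i => ξ' i ω) i
              ≤ u * pNorm μ ξ q₀ * (Real.exp 1 * N / ((i : ℕ) + 1)) ^ (1 / q₀)} ∧
    ∀ i : Fin N,
      μ {ω | u * pNorm μ ξ q₀ * (Real.exp 1 * N / ((i : ℕ) + 1)) ^ (1 / q₀)
            ≤ decRearr (fun i => ξ' i ω) i}
        ≤ ENNReal.ofReal (u ^ (-(((i : ℕ) + 1 : ℝ) * q₀))) := by
  have hq0 : (0:ℝ) < q₀ := by linarith
  have hu0 : (0:ℝ) < u := by linarith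
  set M : ℝ := ∫ ω, |ξ ω| ^ q₀ ∂μ with hMdef
  have hMnonneg : 0 ≤ M := integral_nonneg fun ω => Real.rpow_nonneg (abs_nonneg _) q₀
  have hMpos : 0 < M := by
    rcases hMnonneg.eq_or_lt with h | h
    · exfalso
      have : pNorm μ ξ q₀ = 0 := by
        rw [pNorm, ← hMdef, ← h, Real.zero_rpow (by positivity)]
      rw [this] at hξpos; exact lt_irrefl _ hξpos
    · exact h
  have hPq : pNorm μ ξ q₀ ^ q₀ = M := by
    rw [pNorm, ← hMdef, ← Real.rpow_mul hMnonneg, one_div_mul_cancel (ne_of_gt hq0),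
      Real.rpow_one]
  have hPnonneg : 0 ≤ pNorm μ ξ q₀ := hξpos.le
  -- the key per-index bound
  have key : ∀ i : Fin N,
      μ {ω | u * pNorm μ ξ q₀ * (Real.exp 1 * N / ((i : ℕ) + 1)) ^ (1 / q₀)
            ≤ decRearr (fun i => ξ' i ω) i}
        ≤ ENNReal.ofReal (u ^ (-(((i : ℕ) + 1 : ℝ) * q₀))) := by
    intro i
    have hN : 0 < N := i.pos
    set k : ℕ := (i : ℕ) + 1 with hkdef
    have hkpos : (0:ℝ) < (k:ℝ) := by positivity
    have hcast : ((k:ℕ):ℝ) = ((i:ℕ):ℝ) + 1 := by push_cast [hkdef]; ring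
    set A : ℝ := Real.exp 1 * N / (((i:ℕ):ℝ) + 1) with hAdef
    have hA : 0 < A := by
      apply div_pos (by positivity) (by positivity)
    set t : ℝ := u * pNorm μ ξ q₀ * A ^ (1 / q₀) with htdef
    have ht : 0 < t := by
      apply mul_pos (mul_pos hu0 hξpos) (Real.rpow_pos_of_pos hA _)
    set s : Set ℝ := {x : ℝ | t ≤ |x|} with hsdef
    have hsm : MeasurableSet s := measurableSet_le measurable_const measurable_abs
    set p : ℝ≥0∞ := μ (ξ ⁻¹' s) with hpdef
    -- step 1: inclusion into a union over subsets
    have hsub : {ω | t ≤ decRearr (fun j => ξ' j ω) i}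
        ⊆ ⋃ S ∈ Finset.powersetCard k (Finset.univ : Finset (Fin N)),
            ⋂ j ∈ S, ξ' j ⁻¹' s := by
      intro ω hω
      obtain ⟨S, hScard, hS⟩ := decRearr_exists_finset (fun j => ξ' j ω) i t hω
      refine Set.mem_iUnion₂.mpr ⟨S, Finset.mem_powersetCard_univ.mpr hScard, ?_⟩
      exact Set.mem_iInter₂.mpr fun j hj => hS j hj
    -- step 2: product formula
    have hprod : ∀ S ∈ Finset.powersetCard k (Finset.univ : Finset (Fin N)),
        μ (⋂ j ∈ S, ξ' j ⁻¹' s) = p ^ k := by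
      intro S hS
      have := hindep.measure_inter_preimage_eq_mul S (sets := fun _ => s)
        (fun j _ => hsm)
      rw [this]
      have heq : ∀ j ∈ S, μ (ξ' j ⁻¹' s) = p := fun j _ => (hid j).measure_mem_eq hsm
      rw [Finset.prod_congr rfl heq, Finset.prod_const,
        Finset.mem_powersetCard_univ.mp hS]
    -- step 3: Markov bound on p
    have hp : p ≤ ENNReal.ofReal (M / t ^ q₀) := by
      have := markov_rpow μ ξ q₀ hq0 hξL t ht
      exact this
    -- step 4: real computation
    have hbq : (A ^ (1 / q₀)) ^ q₀ = A := by
      rw [← Real.rpow_mul hA.le, one_div_mul_cancel (ne_of_gt hq0), Real.rpow_one]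
    have htq : t ^ q₀ = u ^ q₀ * M * A := by
      rw [htdef, Real.mul_rpow (by positivity) (Real.rpow_nonneg hA.le _),
        Real.mul_rpow hu0.le hPnonneg, hbq, hPq]
    have hMt : M / t ^ q₀ = u ^ (-q₀) * A⁻¹ := by
      rw [htq, Real.rpow_neg hu0.le]
      have huq : (0:ℝ) < u ^ q₀ := Real.rpow_pos_of_pos hu0 _
      field_simp
    have hMtnonneg : 0 ≤ M / t ^ q₀ := by
      rw [hMt]; positivity
    have hfinal : (N.choose k : ℝ) * (M / t ^ q₀) ^ k ≤ u ^ (-(((i:ℕ):ℝ) + 1) * q₀) := by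
      rw [hMt]
      have hA' : A = Real.exp 1 * N / (k:ℝ) := by rw [hAdef, hcast]
      have hchoose : (N.choose k : ℝ) ≤ A ^ k := by
        rw [hA']; exact choose_le_epow N k (by omega)
      have hnn : (0:ℝ) ≤ (u ^ (-q₀) * A⁻¹) ^ k := by positivity
      calc (N.choose k : ℝ) * (u ^ (-q₀) * A⁻¹) ^ k
          ≤ A ^ k * (u ^ (-q₀) * A⁻¹) ^ k := mul_le_mul_of_nonneg_right hchoose hnn
        _ = (A * (u ^ (-q₀) * A⁻¹)) ^ k := (mul_pow _ _ _).symm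
        _ = (u ^ (-q₀)) ^ k := by
            rw [show A * (u ^ (-q₀) * A⁻¹) = u ^ (-q₀) * (A * A⁻¹) by ring,
              mul_inv_cancel₀ (ne_of_gt hA), mul_one]
        _ = u ^ (-(((i:ℕ):ℝ) + 1) * q₀) := by
            rw [← Real.rpow_natCast (u ^ (-q₀)) k, ← Real.rpow_mul hu0.le]
            congr 1
            rw [hcast]; ring
    -- step 5: assemble
    calc μ {ω | t ≤ decRearr (fun j => ξ' j ω) i}
        ≤ μ (⋃ S ∈ Finset.powersetCard k (Finset.univ : Finset (Fin N)),
            ⋂ j ∈ S, ξ' j ⁻¹' s) := measure_mono hsub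
      _ ≤ ∑ S ∈ Finset.powersetCard k (Finset.univ : Finset (Fin N)),
            μ (⋂ j ∈ S, ξ' j ⁻¹' s) := measure_biUnion_finset_le _ _
      _ = ∑ S ∈ Finset.powersetCard k (Finset.univ : Finset (Fin N)), p ^ k :=
            Finset.sum_congr rfl hprod
      _ = (N.choose k : ℝ≥0∞) * p ^ k := by
            rw [Finset.sum_const, Finset.card_powersetCard, Finset.card_univ,
              Fintype.card_fin, nsmul_eq_mul]
      _ ≤ (N.choose k : ℝ≥0∞) * (ENNReal.ofReal (M / t ^ q₀)) ^ k :=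
            mul_le_mul_right (pow_le_pow_left' hp k) _
      _ = ENNReal.ofReal ((N.choose k : ℝ) * (M / t ^ q₀) ^ k) := by
            rw [← ENNReal.ofReal_pow hMtnonneg, ← ENNReal.ofReal_natCast (N.choose k),
              ← ENNReal.ofReal_mul (by positivity)]
      _ ≤ ENNReal.ofReal (u ^ (-(((i : ℕ) + 1 : ℝ) * q₀))) := by
            apply ENNReal.ofReal_le_ofReal
            convert hfinal using 2
            push_cast; ring
  refine ⟨?_, key⟩
  set a : ℝ := u ^ (-q₀) with hadef
  have ha0 : 0 < a := Real.rpow_pos_of_pos hu0 _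
  have ha4 : a ≤ 1 / 4 := by
    have h2 : u ^ (2:ℝ) = u ^ (2:ℕ) := by
      rw [← Real.rpow_natCast u 2]; norm_num
    have h1 : u ^ (2:ℝ) ≤ u ^ q₀ := Real.rpow_le_rpow_of_exponent_le (by linarith) hq₀.le
    have h2q : (4:ℝ) ≤ u ^ q₀ := by rw [h2] at h1; nlinarith
    rw [hadef, Real.rpow_neg hu0.le]
    calc (u ^ q₀)⁻¹ ≤ (4:ℝ)⁻¹ := by
          apply inv_anti₀ (by norm_num) h2q
      _ = 1 / 4 := by norm_num
  have hterm : ∀ i : Fin N, u ^ (-((((i:ℕ):ℝ) + 1) * q₀)) = a ^ ((i:ℕ) + 1) := by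
    intro i
    rw [hadef, ← Real.rpow_natCast (u ^ (-q₀)) ((i:ℕ)+1), ← Real.rpow_mul hu0.le]
    congr 1
    push_cast; ring
  have hsum : ∑ i : Fin N, a ^ ((i:ℕ) + 1) ≤ 2 * a := by
    rw [Fin.sum_univ_eq_sum_range (fun j => a ^ (j + 1)) N]
    have hmul : ∑ j ∈ Finset.range N, a ^ (j + 1)
        = (∑ j ∈ Finset.range N, a ^ j) * a := by
      rw [Finset.sum_mul]
      exact Finset.sum_congr rfl fun j _ => pow_succ a j
    rw [hmul]
    have hgeom : ∑ j ∈ Finset.range N, a ^ j ≤ 2 := by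
      rw [geom_sum_eq (by intro h; rw [h] at ha4; norm_num at ha4) N]
      rw [div_le_iff_of_neg (by linarith : a - 1 < 0)]
      nlinarith [pow_nonneg ha0.le N]
    exact mul_le_mul_of_nonneg_right hgeom ha0.le
  have hGc : {ω | ∀ i : Fin N,
        decRearr (fun i => ξ' i ω) i
          ≤ u * pNorm μ ξ q₀ * (Real.exp 1 * N / ((i : ℕ) + 1)) ^ (1 / q₀)}ᶜ
      ⊆ ⋃ i : Fin N, {ω | u * pNorm μ ξ q₀ * (Real.exp 1 * N / ((i : ℕ) + 1)) ^ (1 / q₀)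
          ≤ decRearr (fun i => ξ' i ω) i} := by
    intro ω hω
    simp only [Set.mem_compl_iff, Set.mem_setOf_eq, not_forall] at hω
    obtain ⟨i, hi⟩ := hω
    exact Set.mem_iUnion.mpr ⟨i, (not_le.mp hi).le⟩
  have hcompl : μ {ω | ∀ i : Fin N,
        decRearr (fun i => ξ' i ω) i
          ≤ u * pNorm μ ξ q₀ * (Real.exp 1 * N / ((i : ℕ) + 1)) ^ (1 / q₀)}ᶜ
      ≤ ENNReal.ofReal (2 * a) := by
    calc μ _ ≤ μ (⋃ i : Fin N, {ω | u * pNorm μ ξ q₀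
              * (Real.exp 1 * N / ((i : ℕ) + 1)) ^ (1 / q₀)
            ≤ decRearr (fun i => ξ' i ω) i}) := measure_mono hGc
      _ ≤ ∑' i : Fin N, μ {ω | u * pNorm μ ξ q₀
              * (Real.exp 1 * N / ((i : ℕ) + 1)) ^ (1 / q₀)
            ≤ decRearr (fun i => ξ' i ω) i} := measure_iUnion_le _
      _ = ∑ i : Fin N, μ {ω | u * pNorm μ ξ q₀
              * (Real.exp 1 * N / ((i : ℕ) + 1)) ^ (1 / q₀)
            ≤ decRearr (fun i => ξ' i ω) i} := tsum_fintype _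
      _ ≤ ∑ i : Fin N, ENNReal.ofReal (u ^ (-(((i : ℕ) + 1 : ℝ) * q₀))) :=
            Finset.sum_le_sum fun i _ => key i
      _ = ENNReal.ofReal (∑ i : Fin N, u ^ (-(((i : ℕ) + 1 : ℝ) * q₀))) :=
            (ENNReal.ofReal_sum_of_nonneg fun i _ =>
              Real.rpow_nonneg hu0.le _).symm
      _ ≤ ENNReal.ofReal (2 * a) := by
            apply ENNReal.ofReal_le_ofReal
            calc ∑ i : Fin N, u ^ (-(((i : ℕ) + 1 : ℝ) * q₀))
                = ∑ i : Fin N, a ^ ((i:ℕ) + 1) := by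
                  exact Finset.sum_congr rfl fun i _ => hterm i
              _ ≤ 2 * a := hsum
  have h1le : (1:ℝ≥0∞) ≤ μ {ω | ∀ i : Fin N,
        decRearr (fun i => ξ' i ω) i
          ≤ u * pNorm μ ξ q₀ * (Real.exp 1 * N / ((i : ℕ) + 1)) ^ (1 / q₀)}
      + μ {ω | ∀ i : Fin N,
        decRearr (fun i => ξ' i ω) i
          ≤ u * pNorm μ ξ q₀ * (Real.exp 1 * N / ((i : ℕ) + 1)) ^ (1 / q₀)}ᶜ := by
    have h := measure_union_le (μ := μ) {ω | ∀ i : Fin N,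
        decRearr (fun i => ξ' i ω) i
          ≤ u * pNorm μ ξ q₀ * (Real.exp 1 * N / ((i : ℕ) + 1)) ^ (1 / q₀)}
      {ω | ∀ i : Fin N,
        decRearr (fun i => ξ' i ω) i
          ≤ u * pNorm μ ξ q₀ * (Real.exp 1 * N / ((i : ℕ) + 1)) ^ (1 / q₀)}ᶜ
    rw [Set.union_compl_self, measure_univ] at h
    exact h
  calc ENNReal.ofReal (1 - 2 * a)
      = 1 - ENNReal.ofReal (2 * a) := by
        rw [ENNReal.ofReal_sub _ (by positivity), ENNReal.ofReal_one]
    _ ≤ μ {ω | ∀ i : Fin N,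
        decRearr (fun i => ξ' i ω) i
          ≤ u * pNorm μ ξ q₀ * (Real.exp 1 * N / ((i : ℕ) + 1)) ^ (1 / q₀)} := by
        rw [tsub_le_iff_right]
        exact h1le.trans (add_le_add_right hcompl _)
end

section
/- There exists an absolute constant c > 0 for which the following holds. Let n ≥ 2, let g₁,...,gₙ be independent standard Gaussian random variables, and let (g_j*)_{j=1}^n be the non-increasing rearrangement of (|g_j|)_{j=1}^n. Then for every 1 ≤ j ≤ n/2, E g_j* ≥ c √(log(en/j)). -/
open MeasureTheory ProbabilityTheory Real Set


lemma decRearr_le_iff {n : ℕ} (x : Fin n → ℝ) (j : Fin n) (t : ℝ) :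
    t ≤ decRearr x j ↔ (j : ℕ) < Fintype.card {i // t ≤ |x i|} := by
  classical
  set σ := Tuple.sort (fun i => -|x i|) with hσ
  have hanti : Antitone (fun i => |x (σ i)|) := by
    have h := Tuple.monotone_sort (fun i => -|x i|)
    intro a b hab
    have := h hab
    simpa using this
  have h := Tuple.lt_card_ge_iff_apply_ge_of_antitone (f := fun i => |x (σ i)|) (a := t) (j := j) hanti
  rw [← Fintype.card_subtype] at h
  have hcard : Fintype.card {i // t ≤ |x (σ i)|} = Fintype.card {i // t ≤ |x i|} :=
    Fintype.card_congr (σ.subtypeEquiv (fun a => Iff.rfl))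
  rw [hcard] at h
  exact h.symm

noncomputable def stdGaussian (n : ℕ) : Measure (Fin n → ℝ) :=
  Measure.pi fun _ => gaussianReal 0 1

instance (n : ℕ) : IsProbabilityMeasure (stdGaussian n) := by
  unfold _root_.stdGaussian; infer_instance

lemma stdGaussian_map_eval (n : ℕ) (i : Fin n) :
    (stdGaussian n).map (Function.eval i) = gaussianReal 0 1 := by
  ext s hs
  rw [Measure.map_apply (measurable_pi_apply i) hs]
  have hset : Function.eval i ⁻¹' s = Set.pi Set.univ (fun l => if l = i then s else Set.univ) := by
    ext g
    simp only [Set.mem_preimage, Set.mem_pi, Set.mem_univ, true_implies]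
    constructor
    · intro h l; by_cases hl : l = i <;> simp [hl, h]
    · intro h; have := h i; simpa using this
  rw [hset]
  rw [_root_.stdGaussian, Measure.pi_pi]
  have : ∀ l : Fin n, (gaussianReal 0 1) (if l = i then s else Set.univ)
      = if l = i then (gaussianReal 0 1) s else 1 := by
    intro l; by_cases hl : l = i <;> simp [hl]
  simp_rw [this]
  simp [Finset.prod_ite_eq']

lemma stdGaussian_pair (n : ℕ) (i k : Fin n) (hik : i ≠ k) {B : Set ℝ} (hB : MeasurableSet B) :
    (stdGaussian n) {g | g i ∈ B ∧ g k ∈ B} = (gaussianReal 0 1) B * (gaussianReal 0 1) B := by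
  have hset : {g : Fin n → ℝ | g i ∈ B ∧ g k ∈ B}
      = Set.pi Set.univ (fun l => if l = i ∨ l = k then B else Set.univ) := by
    ext g
    simp only [Set.mem_setOf_eq, Set.mem_pi, Set.mem_univ, true_implies]
    constructor
    · intro h l; by_cases hl : l = i ∨ l = k
      · rcases hl with h1 | h2 <;> simp_all
      · simp [hl]
    · intro h
      constructor
      · have := h i; simpa using this
      · have := h k; simpa using this
  rw [hset, _root_.stdGaussian, Measure.pi_pi]
  have : ∀ l : Fin n, (gaussianReal 0 1) (if l = i ∨ l = k then B else Set.univ)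
      = (if l = i then (gaussianReal 0 1) B else 1) * (if l = k then (gaussianReal 0 1) B else 1) := by
    intro l
    by_cases h1 : l = i
    · subst h1; simp [hik]
    · by_cases h2 : l = k <;> simp [h1, h2, hik.symm]
  simp_rw [this]
  rw [Finset.prod_mul_distrib]
  simp [Finset.prod_ite_eq']

lemma gaussianPDFReal_zero_one (x : ℝ) :
    gaussianPDFReal 0 1 x = (Real.sqrt (2 * π))⁻¹ * Real.exp (-x^2 / 2) := by
  simp [gaussianPDFReal]

lemma sqrt_two_pi_le_three : Real.sqrt (2 * π) ≤ 3 := by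
  nlinarith [Real.sq_sqrt (show (0:ℝ) ≤ 2 * π by positivity), Real.sqrt_nonneg (2 * π),
    Real.pi_lt_d2]

lemma two_le_sqrt_two_pi : 2 ≤ Real.sqrt (2 * π) := by
  nlinarith [Real.sq_sqrt (show (0:ℝ) ≤ 2 * π by positivity), Real.sqrt_nonneg (2 * π),
    Real.pi_gt_three]

lemma hasDeriv_aux (x : ℝ) :
    HasDerivAt (fun y : ℝ => -Real.exp (-y^2) / 2) (x * Real.exp (-x^2)) x := by
  have h1 : HasDerivAt (fun y : ℝ => -y^2) (-(2*x)) x := by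
    simpa using (hasDerivAt_pow 2 x).fun_neg
  have h3 := (h1.exp.fun_neg).div_const 2
  refine h3.congr_deriv ?_
  ring

lemma tendsto_aux : Filter.Tendsto (fun y : ℝ => -Real.exp (-y^2) / 2)
    Filter.atTop (nhds 0) := by
  have h1 : Filter.Tendsto (fun y : ℝ => -y^2) Filter.atTop Filter.atBot :=
    Filter.tendsto_neg_atBot_iff.mpr (Filter.tendsto_pow_atTop two_ne_zero)
  have h2 := (Real.tendsto_exp_atBot.comp h1).neg.div_const (2:ℝ)
  simpa using h2

lemma integral_aux (t : ℝ) (ht : 0 ≤ t) :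
    ∫ x in Ioi t, x * Real.exp (-x^2) = Real.exp (-t^2) / 2 := by
  have hpos : ∀ x ∈ Ioi t, 0 ≤ x * Real.exp (-x^2) := fun x hx =>
    mul_nonneg (le_trans ht (le_of_lt hx)) (Real.exp_nonneg _)
  have hderiv : ∀ x ∈ Ici t, HasDerivAt (fun y : ℝ => -Real.exp (-y^2) / 2)
      (x * Real.exp (-x^2)) x := fun x _ => hasDeriv_aux x
  rw [integral_Ioi_of_hasDerivAt_of_nonneg' hderiv hpos tendsto_aux]
  ring

lemma integrableOn_aux (t : ℝ) (ht : 0 ≤ t) :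
    IntegrableOn (fun x => x * Real.exp (-x^2)) (Ioi t) := by
  have hpos : ∀ x ∈ Ioi t, 0 ≤ x * Real.exp (-x^2) := fun x hx =>
    mul_nonneg (le_trans ht (le_of_lt hx)) (Real.exp_nonneg _)
  have hderiv : ∀ x ∈ Ici t, HasDerivAt (fun y : ℝ => -Real.exp (-y^2) / 2)
      (x * Real.exp (-x^2)) x := fun x _ => hasDeriv_aux x
  exact integrableOn_Ioi_deriv_of_nonneg' hderiv hpos tendsto_aux

lemma measurableSet_absSet (t : ℝ) : MeasurableSet {y : ℝ | t ≤ |y|} :=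
  measurableSet_le measurable_const (continuous_abs.measurable)

lemma gauss_tail_lb (t : ℝ) (ht : 0 ≤ t) :
    Real.exp (-t^2) / 6 ≤ ((gaussianReal 0 1) {y : ℝ | t ≤ |y|}).toReal := by
  have hsub : Ici t ⊆ {y : ℝ | t ≤ |y|} := fun y hy => le_trans hy (le_abs_self y)
  have h1 : (gaussianReal 0 1) (Ici t) ≤ (gaussianReal 0 1) {y : ℝ | t ≤ |y|} :=
    measure_mono hsub
  have hfin : (gaussianReal 0 1) {y : ℝ | t ≤ |y|} ≠ ⊤ := measure_ne_top _ _
  have h1' : ((gaussianReal 0 1) (Ici t)).toReal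
      ≤ ((gaussianReal 0 1) {y : ℝ | t ≤ |y|}).toReal :=
    ENNReal.toReal_mono hfin h1
  refine le_trans ?_ h1'
  rw [gaussianReal_apply_eq_integral 0 one_ne_zero (Ici t)]
  rw [ENNReal.toReal_ofReal (setIntegral_nonneg measurableSet_Ici
    (fun x _ => gaussianPDFReal_nonneg 0 1 x))]
  rw [integral_Ici_eq_integral_Ioi]
  have hmono : ∫ x in Ioi t, (Real.sqrt (2 * π))⁻¹ * (x * Real.exp (-x^2))
      ≤ ∫ x in Ioi t, gaussianPDFReal 0 1 x := by
    refine setIntegral_mono_on ((integrableOn_aux t ht).const_mul _)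
      ((integrable_gaussianPDFReal 0 1).integrableOn) measurableSet_Ioi ?_
    intro x hx
    rw [gaussianPDFReal_zero_one]
    have hx0 : (0:ℝ) ≤ x := le_trans ht (le_of_lt hx)
    have hxe : x ≤ Real.exp (x^2/2) := by
      have := Real.add_one_le_exp (x^2/2)
      nlinarith
    have : x * Real.exp (-x^2) ≤ Real.exp (-x^2/2) := by
      have h2 : x * Real.exp (-x^2) ≤ Real.exp (x^2/2) * Real.exp (-x^2) :=
        mul_le_mul_of_nonneg_right hxe (Real.exp_nonneg _)
      rwa [← Real.exp_add, show x^2/2 + -x^2 = -x^2/2 by ring] at h2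
    exact mul_le_mul_of_nonneg_left this (inv_nonneg.mpr (Real.sqrt_nonneg _))
  refine le_trans ?_ hmono
  rw [integral_const_mul, integral_aux t ht]
  have hpos : (0:ℝ) < Real.sqrt (2 * π) := by positivity
  have h9 : (3:ℝ)⁻¹ ≤ (Real.sqrt (2 * π))⁻¹ :=
    inv_anti₀ hpos sqrt_two_pi_le_three
  have he := Real.exp_nonneg (-t^2)
  nlinarith

lemma gauss_ball_ub (t : ℝ) (ht : 0 ≤ t) :
    1 - t ≤ ((gaussianReal 0 1) {y : ℝ | t ≤ |y|}).toReal := by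
  have hcompl : {y : ℝ | t ≤ |y|} = (Ioo (-t) t)ᶜ := by
    ext y
    simp only [Set.mem_setOf_eq, Set.mem_compl_iff, Set.mem_Ioo, not_and_or, not_lt]
    constructor
    · intro h
      rcases abs_le.mp (le_refl |y|) with _
      rcases le_abs.mp h with h1 | h1
      · right; exact h1
      · left; linarith
    · intro h
      rcases h with h | h
      · rw [abs_of_nonpos (by linarith)]; linarith
      · exact le_trans h (le_abs_self y)
  have hν : ((gaussianReal 0 1) (Ioo (-t) t)).toReal ≤ t := by
    rw [gaussianReal_apply_eq_integral 0 one_ne_zero]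
    rw [ENNReal.toReal_ofReal (setIntegral_nonneg measurableSet_Ioo
      (fun x _ => gaussianPDFReal_nonneg 0 1 x))]
    have hmono : ∫ x in Ioo (-t) t, gaussianPDFReal 0 1 x
        ≤ ∫ _x in Ioo (-t) t, (Real.sqrt (2 * π))⁻¹ := by
      refine setIntegral_mono_on ((integrable_gaussianPDFReal 0 1).integrableOn)
        (integrableOn_const measure_Ioo_lt_top.ne) measurableSet_Ioo ?_
      intro x _
      rw [gaussianPDFReal_zero_one]
      have : Real.exp (-x^2/2) ≤ 1 := Real.exp_le_one_iff.mpr (by nlinarith [sq_nonneg x])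
      nlinarith [inv_nonneg.mpr (Real.sqrt_nonneg (2*π))]
    refine le_trans hmono ?_
    rw [setIntegral_const, measureReal_def, Real.volume_Ioo]
    rw [ENNReal.toReal_ofReal (by linarith)]
    have h2 : (Real.sqrt (2*π))⁻¹ ≤ 2⁻¹ := inv_anti₀ (by norm_num) two_le_sqrt_two_pi
    have : t - -t = 2*t := by ring
    rw [this]
    rw [smul_eq_mul]
    nlinarith
  rw [hcompl, prob_compl_eq_one_sub measurableSet_Ioo]
  rw [ENNReal.toReal_sub_of_le prob_le_one (by norm_num)]
  simp only [ENNReal.toReal_one]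
  linarith

noncomputable def cnt (t : ℝ) {n : ℕ} (g : Fin n → ℝ) : ℕ :=
  Fintype.card {i // t ≤ |g i|}

noncomputable def Xf (t : ℝ) {n : ℕ} (i : Fin n) (g : Fin n → ℝ) : ℝ :=
  if t ≤ |g i| then 1 else 0

noncomputable def Sf (t : ℝ) {n : ℕ} (g : Fin n → ℝ) : ℝ := ∑ i, Xf t i g

lemma cnt_eq_sum (t : ℝ) {n : ℕ} (g : Fin n → ℝ) : (cnt t g : ℝ) = Sf t g := by
  classical
  rw [cnt, Fintype.card_subtype, Sf]
  unfold Xf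
  rw [Finset.sum_boole]

lemma Xf_eq_indicator (t : ℝ) {n : ℕ} (i : Fin n) :
    Xf t i = Set.indicator (Function.eval i ⁻¹' {y : ℝ | t ≤ |y|}) (fun _ => (1:ℝ)) := by
  funext g
  simp [Xf, Set.indicator_apply, Function.eval, Set.mem_preimage]

lemma measurable_Xf (t : ℝ) {n : ℕ} (i : Fin n) : Measurable (Xf t i) := by
  rw [Xf_eq_indicator]
  exact (measurable_const.indicator ((measurable_pi_apply i) (measurableSet_absSet t)))

lemma measurable_Sf (t : ℝ) {n : ℕ} : Measurable (Sf t (n := n)) :=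
  Finset.measurable_sum _ (fun i _ => measurable_Xf t i)

lemma measurableSet_cnt_event (t : ℝ) {n : ℕ} (m : ℕ) :
    MeasurableSet {g : Fin n → ℝ | m < cnt t g} := by
  have : {g : Fin n → ℝ | m < cnt t g} = Sf t ⁻¹' (Set.Ici ((m : ℝ) + 1)) := by
    ext g
    simp only [Set.mem_setOf_eq, Set.mem_preimage, Set.mem_Ici]
    rw [← cnt_eq_sum]
    constructor
    · intro h; exact_mod_cast Nat.succ_le_of_lt h
    · intro h; exact_mod_cast Nat.lt_of_succ_le (by exact_mod_cast h)
  rw [this]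
  exact measurable_Sf t measurableSet_Ici

lemma measurable_decRearr {n : ℕ} (j : Fin n) :
    Measurable (fun g : Fin n → ℝ => decRearr g j) := by
  apply measurable_of_Ici
  intro a
  have : (fun g : Fin n → ℝ => decRearr g j) ⁻¹' Set.Ici a
      = {g : Fin n → ℝ | (j : ℕ) < cnt a g} := by
    ext g
    simp only [Set.mem_preimage, Set.mem_Ici, Set.mem_setOf_eq]
    rw [decRearr_le_iff]
    rfl
  rw [this]
  exact measurableSet_cnt_event a _

section Expectation

variable (t : ℝ) {n : ℕ}

noncomputable def pB (t : ℝ) : ℝ := ((gaussianReal 0 1) {y : ℝ | t ≤ |y|}).toReal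

lemma pB_nonneg : 0 ≤ pB t := ENNReal.toReal_nonneg

lemma pB_le_one : pB t ≤ 1 := by
  rw [pB]
  exact ENNReal.toReal_le_of_le_ofReal zero_le_one (by simpa using prob_le_one)

lemma integrable_Xf (i : Fin n) : Integrable (Xf t i) (stdGaussian n) := by
  rw [Xf_eq_indicator]
  exact (integrable_const (1:ℝ)).indicator ((measurable_pi_apply i) (measurableSet_absSet t))

lemma integral_Xf (i : Fin n) : ∫ g, Xf t i g ∂(stdGaussian n) = pB t := by
  rw [Xf_eq_indicator, integral_indicator_const _ ((measurable_pi_apply i) (measurableSet_absSet t))]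
  rw [measureReal_def, ← Measure.map_apply (measurable_pi_apply i) (measurableSet_absSet t),
    stdGaussian_map_eval]
  simp [pB]

lemma Xf_mul_eq_indicator (i k : Fin n) : (fun g => Xf t i g * Xf t k g)
    = Set.indicator {g : Fin n → ℝ | g i ∈ {y : ℝ | t ≤ |y|} ∧ g k ∈ {y : ℝ | t ≤ |y|}}
      (fun _ => (1:ℝ)) := by
  funext g
  simp only [Xf, Set.indicator_apply, Set.mem_setOf_eq]
  by_cases h1 : t ≤ |g i| <;> by_cases h2 : t ≤ |g k| <;> simp [h1, h2]

lemma measurableSet_pairSet (i k : Fin n) :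
    MeasurableSet {g : Fin n → ℝ | g i ∈ {y : ℝ | t ≤ |y|} ∧ g k ∈ {y : ℝ | t ≤ |y|}} :=
  by
  have : {g : Fin n → ℝ | g i ∈ {y : ℝ | t ≤ |y|} ∧ g k ∈ {y : ℝ | t ≤ |y|}}
      = (Function.eval i ⁻¹' {y : ℝ | t ≤ |y|}) ∩ (Function.eval k ⁻¹' {y : ℝ | t ≤ |y|}) := rfl
  rw [this]
  exact ((measurable_pi_apply i) (measurableSet_absSet t)).inter
    ((measurable_pi_apply k) (measurableSet_absSet t))

lemma integrable_Xf_mul (i k : Fin n) :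
    Integrable (fun g => Xf t i g * Xf t k g) (stdGaussian n) := by
  rw [Xf_mul_eq_indicator]
  exact (integrable_const (1:ℝ)).indicator (measurableSet_pairSet t i k)

lemma integral_Xf_mul (i k : Fin n) (hik : i ≠ k) :
    ∫ g, Xf t i g * Xf t k g ∂(stdGaussian n) = pB t * pB t := by
  rw [Xf_mul_eq_indicator, integral_indicator_const _ (measurableSet_pairSet t i k)]
  rw [measureReal_def, stdGaussian_pair n i k hik (measurableSet_absSet t)]
  rw [ENNReal.toReal_mul]
  simp [pB]

lemma integral_Xf_sq (i : Fin n) :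
    ∫ g, Xf t i g * Xf t i g ∂(stdGaussian n) = pB t := by
  have : (fun g : Fin n → ℝ => Xf t i g * Xf t i g) = Xf t i := by
    funext g; simp only [Xf]; by_cases h : t ≤ |g i| <;> simp [h]
  rw [this, integral_Xf]

lemma integrable_Sf : Integrable (Sf t) (stdGaussian n) :=
  integrable_finset_sum _ (fun i _ => integrable_Xf t i)

lemma integral_Sf : ∫ g, Sf t g ∂(stdGaussian n) = n * pB t := by
  have : (fun g : Fin n → ℝ => Sf t g) = fun g => ∑ i, Xf t i g := rfl
  rw [this, integral_finset_sum _ (fun i _ => integrable_Xf t i)]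
  simp [integral_Xf, mul_comm]

lemma integrable_Sf_sq : Integrable (fun g => (Sf t g)^2) (stdGaussian n) := by
  have : (fun g : Fin n → ℝ => (Sf t g)^2) = fun g => ∑ i, ∑ k, Xf t i g * Xf t k g := by
    funext g
    rw [Sf, sq, Finset.sum_mul_sum]
  rw [this]
  exact integrable_finset_sum _ (fun i _ =>
    integrable_finset_sum _ (fun k _ => integrable_Xf_mul t i k))

lemma integral_Sf_sq :
    ∫ g, (Sf t g)^2 ∂(stdGaussian n) = n * pB t + ((n:ℝ)^2 - n) * (pB t)^2 := by
  have h1 : (fun g : Fin n → ℝ => (Sf t g)^2) = fun g => ∑ i, ∑ k, Xf t i g * Xf t k g := by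
    funext g
    rw [Sf, sq, Finset.sum_mul_sum]
  rw [h1, integral_finset_sum _ (fun i _ =>
    integrable_finset_sum _ (fun k _ => integrable_Xf_mul t i k))]
  have h2 : ∀ i : Fin n, ∫ g, ∑ k, Xf t i g * Xf t k g ∂(stdGaussian n)
      = ∑ k : Fin n, if i = k then pB t else pB t * pB t := by
    intro i
    rw [integral_finset_sum _ (fun k _ => integrable_Xf_mul t i k)]
    refine Finset.sum_congr rfl (fun k _ => ?_)
    by_cases hik : i = k
    · subst hik; simp [integral_Xf_sq]
    · simp [hik, integral_Xf_mul t i k hik]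
  simp_rw [h2]
  have h3 : ∀ i : Fin n, (∑ k : Fin n, if i = k then pB t else pB t * pB t)
      = n * (pB t * pB t) + (pB t - pB t * pB t) := by
    intro i
    have : ∀ k : Fin n, (if i = k then pB t else pB t * pB t)
        = pB t * pB t + (if i = k then pB t - pB t * pB t else 0) := by
      intro k; by_cases hik : i = k <;> simp [hik]
    simp_rw [this, Finset.sum_add_distrib, Finset.sum_ite_eq, Finset.sum_const]
    simp [mul_comm]
  simp_rw [h3, Finset.sum_const]
  simp only [Finset.card_univ, Fintype.card_fin, nsmul_eq_mul]
  ring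

end Expectation

section Cheb

variable (t : ℝ) {n : ℕ}

lemma integrable_dev_sq :
    Integrable (fun g => ((n:ℝ) * pB t - Sf t g)^2) (stdGaussian n) := by
  have h : (fun g : Fin n → ℝ => ((n:ℝ) * pB t - Sf t g)^2)
      = fun g => (((n:ℝ) * pB t)^2 - (2 * n * pB t) * Sf t g) + (Sf t g)^2 := by
    funext g; ring
  rw [h]
  exact ((integrable_const _).sub ((integrable_Sf t).const_mul _)).add (integrable_Sf_sq t)

lemma integral_dev_sq :
    ∫ g, ((n:ℝ) * pB t - Sf t g)^2 ∂(stdGaussian n) = n * pB t * (1 - pB t) := by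
  have h : (fun g : Fin n → ℝ => ((n:ℝ) * pB t - Sf t g)^2)
      = fun g => (((n:ℝ) * pB t)^2 - (2 * n * pB t) * Sf t g) + (Sf t g)^2 := by
    funext g; ring
  have hint1 : Integrable (fun g : Fin n → ℝ => ((n:ℝ) * pB t)^2 - (2 * n * pB t) * Sf t g)
      (stdGaussian n) := (integrable_const _).sub ((integrable_Sf t).const_mul _)
  rw [h, integral_add hint1 (integrable_Sf_sq t)]
  have hint2 : Integrable (fun g : Fin n → ℝ => (2 * n * pB t) * Sf t g) (stdGaussian n) :=
    (integrable_Sf t).const_mul _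
  rw [integral_sub (integrable_const _) hint2]
  rw [integral_const_mul, integral_Sf, integral_Sf_sq, integral_const]
  simp only [probReal_univ, measure_univ, ENNReal.toReal_one, smul_eq_mul, one_mul]
  ring

lemma prob_event_ge_half (j : ℕ) (hjp : (j:ℝ) < n * pB t)
    (hcond : (n:ℝ) * pB t * (1 - pB t) ≤ 1/2 * ((n:ℝ) * pB t - j)^2) :
    (1/2 : ℝ) ≤ ((stdGaussian n) {g : Fin n → ℝ | j < cnt t g}).toReal := by
  set p := pB t
  set ε := ((n:ℝ) * p - j)^2 with hε
  have hεpos : 0 < ε := by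
    have : (0:ℝ) < (n:ℝ) * p - j := by linarith
    positivity
  have hsub : {g : Fin n → ℝ | j < cnt t g}ᶜ
      ⊆ {g : Fin n → ℝ | ε ≤ ((n:ℝ) * p - Sf t g)^2} := by
    intro g hg
    simp only [Set.mem_compl_iff, Set.mem_setOf_eq, not_lt] at hg
    have hSle : Sf t g ≤ (j:ℝ) := by
      rw [← cnt_eq_sum]
      exact_mod_cast hg
    have h1 : (0:ℝ) ≤ (n:ℝ) * p - j := le_of_lt (by linarith)
    have h2 : (n:ℝ) * p - j ≤ (n:ℝ) * p - Sf t g := by linarith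
    simp only [Set.mem_setOf_eq, hε]
    nlinarith
  have hmarkov := mul_meas_ge_le_integral_of_nonneg
    (μ := stdGaussian n) (f := fun g => ((n:ℝ) * p - Sf t g)^2)
    (ae_of_all _ (fun g => sq_nonneg _)) (integrable_dev_sq t) ε
  rw [integral_dev_sq, measureReal_def] at hmarkov
  have hmono : ((stdGaussian n) {g : Fin n → ℝ | j < cnt t g}ᶜ).toReal
      ≤ ((stdGaussian n) {g : Fin n → ℝ | ε ≤ ((n:ℝ) * p - Sf t g)^2}).toReal :=
    ENNReal.toReal_mono (measure_ne_top _ _) (measure_mono hsub)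
  have hcompl_le : ((stdGaussian n) {g : Fin n → ℝ | j < cnt t g}ᶜ).toReal ≤ 1/2 := by
    by_contra hlt
    push_neg at hlt
    have : ε * ((stdGaussian n) {g : Fin n → ℝ | ε ≤ ((n:ℝ) * p - Sf t g)^2}).toReal > ε * (1/2) := by
      have := lt_of_lt_of_le hlt hmono
      exact (mul_lt_mul_iff_right₀ hεpos).mpr this
    nlinarith
  have hA : MeasurableSet {g : Fin n → ℝ | j < cnt t g} := measurableSet_cnt_event t j
  have := prob_compl_eq_one_sub (μ := stdGaussian n) hA
  have htotal : ((stdGaussian n) {g : Fin n → ℝ | j < cnt t g}).toReal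
      = 1 - ((stdGaussian n) {g : Fin n → ℝ | j < cnt t g}ᶜ).toReal := by
    rw [this, ENNReal.toReal_sub_of_le prob_le_one (by norm_num)]
    simp
  rw [htotal]
  linarith

end Cheb

lemma integrable_abs_gaussian : Integrable (fun y : ℝ => |y|) (gaussianReal 0 1) := by
  rw [gaussianReal_of_var_ne_zero 0 one_ne_zero]
  rw [integrable_withDensity_iff (measurable_gaussianPDF 0 1)
    (ae_of_all _ (fun x => ENNReal.ofReal_lt_top))]
  have hpdf : ∀ x : ℝ, (gaussianPDF 0 1 x).toReal = gaussianPDFReal 0 1 x := fun x =>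
    ENNReal.toReal_ofReal (gaussianPDFReal_nonneg 0 1 x)
  have hmeas : AEStronglyMeasurable (fun x : ℝ => |x| * (gaussianPDF 0 1 x).toReal) volume := by
    refine (measurable_abs.mul ?_).aestronglyMeasurable
    exact (measurable_gaussianPDF 0 1).ennreal_toReal
  refine Integrable.mono' ((integrable_exp_neg_mul_sq (show (0:ℝ) < 1/4 by norm_num)).const_mul
    ((Real.sqrt (2 * π))⁻¹)) hmeas (ae_of_all _ (fun x => ?_))
  rw [Real.norm_eq_abs, hpdf, gaussianPDFReal_zero_one]
  rw [abs_of_nonneg (by positivity)]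
  have h1 : |x| ≤ Real.exp (x^2/4) := by
    have h2 := Real.add_one_le_exp (x^2/4)
    nlinarith [abs_nonneg x, sq_abs x, sq_nonneg (|x|/2 - 1)]
  have h3 : |x| * Real.exp (-x^2/2) ≤ Real.exp (-(1/4) * x^2) := by
    have h4 : |x| * Real.exp (-x^2/2) ≤ Real.exp (x^2/4) * Real.exp (-x^2/2) :=
      mul_le_mul_of_nonneg_right h1 (Real.exp_nonneg _)
    rwa [← Real.exp_add, show x^2/4 + -x^2/2 = -(1/4) * x^2 by ring] at h4
  calc |x| * ((Real.sqrt (2 * π))⁻¹ * Real.exp (-x^2/2))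
      = (Real.sqrt (2 * π))⁻¹ * (|x| * Real.exp (-x^2/2)) := by ring
    _ ≤ (Real.sqrt (2 * π))⁻¹ * Real.exp (-(1/4) * x^2) :=
        mul_le_mul_of_nonneg_left h3 (by positivity)

lemma integrable_coord (n : ℕ) (i : Fin n) :
    Integrable (fun g : Fin n → ℝ => |g i|) (stdGaussian n) := by
  have hmp : MeasurePreserving (Function.eval i) (stdGaussian n) (gaussianReal 0 1) :=
    ⟨measurable_pi_apply i, stdGaussian_map_eval n i⟩
  have := (hmp.integrable_comp measurable_abs.aestronglyMeasurable).mpr integrable_abs_gaussian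
  exact this

lemma integrable_decRearr (n : ℕ) (j : Fin n) :
    Integrable (fun g => decRearr g j) (stdGaussian n) := by
  refine Integrable.mono' (integrable_finset_sum Finset.univ
    (fun i (_ : i ∈ Finset.univ) => integrable_coord n i))
    (measurable_decRearr j).aestronglyMeasurable (ae_of_all _ (fun g => ?_))
  rw [Real.norm_eq_abs, decRearr, abs_abs]
  exact Finset.single_le_sum (f := fun i => |g i|) (fun i _ => abs_nonneg _)
    (Finset.mem_univ _)

lemma expectation_lb (n : ℕ) (j : Fin n) (t : ℝ) (ht : 0 ≤ t)
    (hhalf : (1/2 : ℝ) ≤ ((stdGaussian n) {g : Fin n → ℝ | (j:ℕ) < cnt t g}).toReal) :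
    t / 2 ≤ ∫ g, decRearr g j ∂(stdGaussian n) := by
  set A := {g : Fin n → ℝ | (j:ℕ) < cnt t g} with hA
  have hAm : MeasurableSet A := measurableSet_cnt_event t _
  have hle : ∀ g, Set.indicator A (fun _ => t) g ≤ decRearr g j := by
    intro g
    by_cases hg : g ∈ A
    · rw [Set.indicator_of_mem hg]
      exact (decRearr_le_iff g j t).mpr hg
    · rw [Set.indicator_of_notMem hg]
      exact abs_nonneg _
  have hint : ∫ g, Set.indicator A (fun _ => t) g ∂(stdGaussian n)
      ≤ ∫ g, decRearr g j ∂(stdGaussian n) :=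
    integral_mono ((integrable_const t).indicator hAm) (integrable_decRearr n j) hle
  rw [integral_indicator_const _ hAm] at hint
  refine le_trans ?_ hint
  rw [smul_eq_mul, measureReal_def]
  nlinarith [hhalf, ht]
lemma arithA {m k : ℝ} (h8 : 8 * k ≤ m) (hk : 1 ≤ k) : m ≤ 1/2 * (m - (k - 1))^2 := by
  nlinarith [sq_nonneg (m - 8*k), mul_nonneg (sub_nonneg.2 h8) (sub_nonneg.2 hk), sq_nonneg (k-1)]

lemma arithB {nn k p : ℝ} (hn : 2 ≤ nn) (hk : 1 ≤ k) (h2k : 2*k ≤ nn)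
    (hp9 : 9/10 ≤ p) (hp1 : p ≤ 1) :
    nn * p * (1 - p) ≤ 1/2 * (nn * p - (k - 1))^2 := by
  have h1 : nn * p * (1 - p) ≤ nn * (1/10) := by
    nlinarith [mul_nonneg (by linarith : (0:ℝ) ≤ nn) (sq_nonneg (1 - p))]
  have h2 : (9/10) * nn ≤ nn * p := by nlinarith
  nlinarith [sq_nonneg (nn*p - k + 1)]
/-- there is an absolute constant `c > 0` such that if `g₁,...,gₙ` are
independent standard Gaussians (`n ≥ 2`) and `(g_j*)` is the non-increasing rearrangement
of `(|g_j|)`, then `E g_j* ≥ c √(log(en/j))` for every `1 ≤ j ≤ n/2`.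
Here `j : Fin n` represents the `(j+1)`-st largest value (1-based index `j+1`). -/
theorem stmt19 :
    ∃ c : ℝ, 0 < c ∧
      ∀ (n : ℕ), 2 ≤ n → ∀ j : Fin n, 2 * ((j : ℕ) + 1) ≤ n →
        c * Real.sqrt (Real.log (Real.exp 1 * n / ((j : ℕ) + 1)))
          ≤ ∫ g, decRearr g j ∂(stdGaussian n) := by
  refine ⟨1/100, by norm_num, fun n hn j hj => ?_⟩
  set kR : ℝ := ((j : ℕ) : ℝ) + 1 with hkR
  set L : ℝ := Real.log (Real.exp 1 * n / kR) with hLdef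
  have hkR1 : (1:ℝ) ≤ kR := by
    rw [hkR]; have : (0:ℝ) ≤ ((j:ℕ):ℝ) := Nat.cast_nonneg _; linarith
  have hnR : (2:ℝ) ≤ (n:ℝ) := by exact_mod_cast hn
  have h2k : 2 * kR ≤ (n:ℝ) := by
    have : ((2 * ((j:ℕ) + 1) : ℕ) : ℝ) ≤ ((n:ℕ) : ℝ) := by exact_mod_cast hj
    push_cast at this
    linarith
  have hkpos : (0:ℝ) < kR := by linarith
  have hratpos : (0:ℝ) < Real.exp 1 * n / kR := by positivity
  have heL : Real.exp L = Real.exp 1 * n / kR := Real.exp_log hratpos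
  have hkey : kR = Real.exp 1 * n * Real.exp (-L) := by
    have h1 : kR * Real.exp L = Real.exp 1 * n := by
      rw [heL]; field_simp
    rw [Real.exp_neg]
    field_simp
    linarith [h1]
  set a : ℝ := 1 + Real.log 48 with ha
  have halog : (0:ℝ) < Real.log 48 := Real.log_pos (by norm_num)
  have hapos : 0 < a := by positivity
  by_cases hL : 2 * a ≤ L
  · -- large L case
    set t : ℝ := Real.sqrt (L - a) with htdef
    have hLa : 0 ≤ L - a := by linarith
    have ht : 0 ≤ t := Real.sqrt_nonneg _
    have htsq : t^2 = L - a := Real.sq_sqrt hLa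
    have hexp : Real.exp (-(L - a)) = 48 * Real.exp 1 * Real.exp (-L) := by
      rw [show -(L - a) = a + -L by ring, Real.exp_add, ha, Real.exp_add,
        Real.exp_log (by norm_num : (0:ℝ) < 48)]
      ring
    have hptail : Real.exp (-t^2) / 6 ≤ pB t := gauss_tail_lb t ht
    rw [htsq, hexp] at hptail
    have hnp : 8 * kR ≤ (n:ℝ) * pB t := by
      have h6 : (n:ℝ) * (48 * Real.exp 1 * Real.exp (-L) / 6) ≤ (n:ℝ) * pB t :=
        mul_le_mul_of_nonneg_left hptail (by positivity)
      calc 8 * kR = (n:ℝ) * (48 * Real.exp 1 * Real.exp (-L) / 6) := by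
            rw [hkey]; ring
        _ ≤ (n:ℝ) * pB t := h6
    have hjR : ((j:ℕ) : ℝ) = kR - 1 := by rw [hkR]; ring
    have hp1 : pB t ≤ 1 := pB_le_one t
    have hp0 : 0 ≤ pB t := pB_nonneg t
    have hjp : ((j:ℕ) : ℝ) < (n:ℝ) * pB t := by
      rw [hjR]; linarith
    have hcond : (n:ℝ) * pB t * (1 - pB t) ≤ 1/2 * ((n:ℝ) * pB t - ((j:ℕ):ℝ))^2 := by
      rw [hjR]
      have hA := arithA (m := (n:ℝ) * pB t) (k := kR) hnp hkR1
      have hnpp : 0 ≤ (n:ℝ) * pB t * pB t := by positivity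
      have hexpand : (n:ℝ) * pB t * (1 - pB t) = (n:ℝ) * pB t - (n:ℝ) * pB t * pB t := by ring
      linarith
    have hhalf := prob_event_ge_half t ((j:ℕ)) hjp hcond
    have hfinal := expectation_lb n j t ht hhalf
    refine le_trans ?_ hfinal
    have h4 : L ≤ 4 * (L - a) := by linarith
    have h5 : Real.sqrt L ≤ 2 * Real.sqrt (L - a) := by
      have := Real.sqrt_le_sqrt h4
      rwa [show (4:ℝ) * (L - a) = (2:ℝ)^2 * (L - a) by ring, Real.sqrt_mul (by norm_num),
        Real.sqrt_sq (by norm_num : (0:ℝ) ≤ 2)] at this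
    linarith [Real.sqrt_nonneg (L - a), h5]
  · -- small L case
    push_neg at hL
    set t : ℝ := 1/10 with htdef
    have ht : (0:ℝ) ≤ t := by norm_num
    have hpball : 1 - t ≤ pB t := gauss_ball_ub t ht
    have hp9 : (9:ℝ)/10 ≤ pB t := by rw [htdef] at hpball; linarith
    have hp1 : pB t ≤ 1 := pB_le_one t
    have hjR : ((j:ℕ) : ℝ) = kR - 1 := by rw [hkR]; ring
    have h910 : (n:ℝ) * (9/10) ≤ (n:ℝ) * pB t :=
      mul_le_mul_of_nonneg_left hp9 (by positivity)
    have hjp : ((j:ℕ) : ℝ) < (n:ℝ) * pB t := by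
      rw [hjR]; linarith
    have hcond : (n:ℝ) * pB t * (1 - pB t) ≤ 1/2 * ((n:ℝ) * pB t - ((j:ℕ):ℝ))^2 := by
      rw [hjR]
      exact arithB hnR hkR1 h2k hp9 hp1
    have hhalf := prob_event_ge_half t ((j:ℕ)) hjp hcond
    have hfinal := expectation_lb n j t ht hhalf
    refine le_trans ?_ hfinal
    -- 1/100 * sqrt L ≤ 1/20
    have hlog48 : Real.log 48 ≤ 6 * Real.log 2 := by
      calc Real.log 48 ≤ Real.log 64 := Real.log_le_log (by norm_num) (by norm_num)
        _ = 6 * Real.log 2 := by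
            rw [show (64:ℝ) = 2^6 by norm_num, Real.log_pow]; push_cast; ring
    have hlog2 : Real.log 2 < 0.6931471808 := Real.log_two_lt_d9
    have hL25 : L ≤ 25 := by nlinarith
    have hsqrtL : Real.sqrt L ≤ 5 := by
      have := Real.sqrt_le_sqrt hL25
      rwa [show (25:ℝ) = 5^2 by norm_num, Real.sqrt_sq (by norm_num : (0:ℝ) ≤ 5)] at this
    rw [htdef]
    linarith [Real.sqrt_nonneg L, hsqrtL]
end
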